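/- Law of large numbers for the density process: fix v ∈ (0,1] and for each integer K ≥ 1 let (Z_n^K)_{n≥0} be a Markov chain on the nonnegative integers such that, conditionally on Z_{n−1}^K, Z_n^K = Z_{n−1}^K + Σ_{j=1}^{Z_{n−1}^K} ξ_{n,j}, where the ξ_{n,j} are conditionally i.i.d. Bernoulli random variables with success probability vK/(K + Z_{n−1}^K). Let X_n^K = Z_n^K/K. If X_0^K → x_0 ≥ 0 (deterministically) as K → ∞, then for every fixed n, X_n^K converges in probability to f_n(x_0) as K → ∞, where f(x) = x + vx/(1+x) and f_n is its n-th iterate. -/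

import Mathlib

open Set Filter Topology MeasureTheory ProbabilityTheory

noncomputable section

private lemma pcr_sum_ite {M z : ℕ} (hzM : z ≤ M) (Q : ℕ → Prop) [DecidablePred Q] :
    (∑ j ∈ Finset.range M, if j < z ∧ Q j then 1 else 0) =
      ∑ j ∈ Finset.range z, if Q j then (1:ℕ) else 0 := by
  have h : Finset.range z = (Finset.range M).filter (· < z) := by
    ext j; simp [Finset.mem_filter, Finset.mem_range]; omega
  rw [h, Finset.sum_filter]
  refine Finset.sum_congr rfl fun j _ => ?_
  by_cases h1 : j < z <;> by_cases h2 : Q j <;> simp [h1, h2]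

private lemma pcr_lip {v : ℝ} (hv0 : 0 < v) (hv1 : v ≤ 1) {x y : ℝ} (hx : 0 ≤ x) (hy : 0 ≤ y) :
    |(x + v * x / (1 + x)) - (y + v * y / (1 + y))| ≤ 2 * |x - y| := by
  have h1 : (0:ℝ) < 1 + x := by linarith
  have h2 : (0:ℝ) < 1 + y := by linarith
  have key : (x + v * x / (1 + x)) - (y + v * y / (1 + y))
      = (x - y) * (1 + v / ((1 + x) * (1 + y))) := by field_simp; ring
  rw [key, abs_mul, mul_comm]
  have h3 : 0 ≤ v / ((1+x)*(1+y)) := by positivity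
  have h4 : v / ((1+x)*(1+y)) ≤ 1 := by
    rw [div_le_one (by positivity)]; nlinarith
  have h5 : |1 + v / ((1+x)*(1+y))| ≤ 2 := by
    rw [abs_of_nonneg (by linarith)]; linarith
  exact mul_le_mul_of_nonneg_right h5 (abs_nonneg _)

private lemma pcr_integrable {α : Type*} [MeasureSpace α] [IsProbabilityMeasure (ℙ : Measure α)]
    {g : α → ℝ} (hm : Measurable g) {C : ℝ} (hb : ∀ x, |g x| ≤ C) :
    Integrable g ℙ :=
  (integrable_const C).mono' hm.aestronglyMeasurable (Eventually.of_forall (by simpa using hb))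

private lemma pcr_unif_prob {α : Type*} [MeasureSpace α] {Uf : α → ℝ}
    (hm : Measurable Uf)
    (hu : Measure.map Uf ℙ = (volume : Measure ℝ).restrict (Set.Icc 0 1))
    {p : ℝ} (hp0 : 0 ≤ p) (hp1 : p ≤ 1) :
    (ℙ : Measure α) {ω | Uf ω ≤ p} = ENNReal.ofReal p := by
  have h0 : {ω | Uf ω ≤ p} = Uf ⁻¹' Set.Iic p := rfl
  rw [h0, ← Measure.map_apply hm measurableSet_Iic, hu,
    Measure.restrict_apply measurableSet_Iic]
  have h1 : Set.Iic p ∩ Set.Icc 0 1 = Set.Icc 0 p := by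
    ext x; simp only [Set.mem_inter_iff, Set.mem_Iic, Set.mem_Icc]
    constructor
    · rintro ⟨h1, h2, _⟩; exact ⟨h2, h1⟩
    · rintro ⟨h1, h2⟩; exact ⟨h2, h1, h2.trans hp1⟩
  rw [h1, Real.volume_Icc]; simp

private def pcrP (v : ℝ) (K z : ℕ) : ℝ := v * K / (K + (z:ℝ))

private lemma pcrP_nonneg {v : ℝ} (hv0 : 0 < v) (K z : ℕ) : 0 ≤ pcrP v K z := by
  unfold pcrP
  have : (0:ℝ) ≤ K := Nat.cast_nonneg K
  have : (0:ℝ) ≤ z := Nat.cast_nonneg z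
  positivity

private lemma pcrP_le_one {v : ℝ} (hv0 : 0 < v) (hv1 : v ≤ 1) {K : ℕ} (hK : 1 ≤ K) (z : ℕ) :
    pcrP v K z ≤ 1 := by
  have hKpos : (0:ℝ) < K := by exact_mod_cast hK
  have hz : (0:ℝ) ≤ z := Nat.cast_nonneg z
  unfold pcrP
  rw [div_le_one (by positivity)]
  nlinarith

private def pcrY {α : Type*} (v : ℝ) (K : ℕ) (U : ℕ → ℕ → α → ℝ) (n z j : ℕ) (ω : α) : ℝ :=
  (if U (n+1) j ω ≤ pcrP v K z then (1:ℝ) else 0) - pcrP v K z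

private def pcrD {α : Type*} (v : ℝ) (K : ℕ) (U : ℕ → ℕ → α → ℝ) (n z : ℕ) (ω : α) : ℝ :=
  ∑ j ∈ Finset.range z, pcrY v K U n z j ω

private lemma pcrY_meas {α : Type*} [MeasurableSpace α] (v : ℝ) (K : ℕ) (U : ℕ → ℕ → α → ℝ)
    (hU : ∀ m j, Measurable (U m j)) (n z j : ℕ) : Measurable (pcrY v K U n z j) := by
  unfold pcrY
  exact (Measurable.ite (measurableSet_le (hU _ _) measurable_const) measurable_const
    measurable_const).sub measurable_const

private lemma pcrD_meas {α : Type*} [MeasurableSpace α] (v : ℝ) (K : ℕ) (U : ℕ → ℕ → α → ℝ)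
    (hU : ∀ m j, Measurable (U m j)) (n z : ℕ) : Measurable (pcrD v K U n z) :=
  Finset.measurable_sum _ fun j _ => pcrY_meas v K U hU n z j

private lemma pcrY_abs_le {α : Type*} {v : ℝ} (hv0 : 0 < v) (hv1 : v ≤ 1) {K : ℕ} (hK : 1 ≤ K)
    (U : ℕ → ℕ → α → ℝ) (n z j : ℕ) (ω : α) : |pcrY v K U n z j ω| ≤ 1 := by
  have h0 := pcrP_nonneg hv0 K z
  have h1 := pcrP_le_one hv0 hv1 hK z
  unfold pcrY
  split_ifs <;> rw [abs_le] <;> constructor <;> linarith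

private lemma pcrD_abs_le {α : Type*} {v : ℝ} (hv0 : 0 < v) (hv1 : v ≤ 1) {K : ℕ} (hK : 1 ≤ K)
    (U : ℕ → ℕ → α → ℝ) (n z : ℕ) (ω : α) : |pcrD v K U n z ω| ≤ z := by
  unfold pcrD
  calc |∑ j ∈ Finset.range z, pcrY v K U n z j ω| ≤ ∑ j ∈ Finset.range z, |pcrY v K U n z j ω| :=
        Finset.abs_sum_le_sum_abs _ _
    _ ≤ ∑ j ∈ Finset.range z, 1 := Finset.sum_le_sum fun j _ => pcrY_abs_le hv0 hv1 hK U n z j ω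
    _ = z := by simp

private lemma pcrY_integral {α : Type*} [MeasureSpace α] [IsProbabilityMeasure (ℙ : Measure α)]
    {v : ℝ} (hv0 : 0 < v) (hv1 : v ≤ 1) {K : ℕ} (hK : 1 ≤ K)
    (U : ℕ → ℕ → α → ℝ) (hU : ∀ m j, Measurable (U m j))
    (hUunif : ∀ m j, Measure.map (U m j) ℙ = (volume : Measure ℝ).restrict (Set.Icc 0 1))
    (n z j : ℕ) : ∫ ω, pcrY v K U n z j ω ∂ℙ = 0 := by
  have h0 := pcrP_nonneg hv0 K z
  have h1 := pcrP_le_one hv0 hv1 hK z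
  have hind : (fun ω => (if U (n+1) j ω ≤ pcrP v K z then (1:ℝ) else 0)) =
      Set.indicator {ω | U (n+1) j ω ≤ pcrP v K z} (fun _ => (1:ℝ)) := by
    funext ω; simp [Set.indicator_apply]
  have hmeas : MeasurableSet {ω | U (n+1) j ω ≤ pcrP v K z} :=
    measurableSet_le (hU _ _) measurable_const
  have hint1 : Integrable (fun ω => (if U (n+1) j ω ≤ pcrP v K z then (1:ℝ) else 0)) ℙ := by
    apply pcr_integrable (C := 1)
    · exact Measurable.ite hmeas measurable_const measurable_const
    · intro x; split_ifs <;> simp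
  unfold pcrY
  rw [integral_sub hint1 (integrable_const _), integral_const]
  rw [hind, integral_indicator_const _ hmeas, measureReal_def, pcr_unif_prob (hU _ _) (hUunif _ _) h0 h1]
  simp [measure_univ, ENNReal.toReal_ofReal h0]

private lemma pcrY_mul_integral {α : Type*} [MeasureSpace α]
    [IsProbabilityMeasure (ℙ : Measure α)]
    {v : ℝ} (hv0 : 0 < v) (hv1 : v ≤ 1) {K : ℕ} (hK : 1 ≤ K)
    (U : ℕ → ℕ → α → ℝ) (hU : ∀ m j, Measurable (U m j))
    (hUindep : iIndepFun
        (fun p : ℕ × ℕ => U p.1 p.2) ℙ)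
    (hUunif : ∀ m j, Measure.map (U m j) ℙ = (volume : Measure ℝ).restrict (Set.Icc 0 1))
    (n z : ℕ) {j j' : ℕ} (hjj' : j ≠ j') :
    ∫ ω, pcrY v K U n z j ω * pcrY v K U n z j' ω ∂ℙ = 0 := by
  have hne : ((n+1 : ℕ), j) ≠ ((n+1 : ℕ), j') := by simp [hjj']
  have hphi : Measurable (fun u : ℝ => (if u ≤ pcrP v K z then (1:ℝ) else 0) - pcrP v K z) :=
    (Measurable.ite (measurableSet_le measurable_id measurable_const) measurable_const
      measurable_const).sub measurable_const
  have hindep : IndepFun (pcrY v K U n z j) (pcrY v K U n z j') ℙ :=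
    (hUindep.indepFun hne).comp hphi hphi
  have := hindep.integral_mul_eq_mul_integral (pcrY_meas v K U hU n z j).aestronglyMeasurable
    (pcrY_meas v K U hU n z j').aestronglyMeasurable
  calc ∫ ω, pcrY v K U n z j ω * pcrY v K U n z j' ω ∂ℙ
      = ∫ ω, (pcrY v K U n z j * pcrY v K U n z j') ω ∂ℙ := rfl
    _ = (∫ ω, pcrY v K U n z j ω ∂ℙ) * ∫ ω, pcrY v K U n z j' ω ∂ℙ := this
    _ = 0 := by rw [pcrY_integral hv0 hv1 hK U hU hUunif n z j]; ring

private lemma pcrD_sq_integral {α : Type*} [MeasureSpace α]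
    [IsProbabilityMeasure (ℙ : Measure α)]
    {v : ℝ} (hv0 : 0 < v) (hv1 : v ≤ 1) {K : ℕ} (hK : 1 ≤ K)
    (U : ℕ → ℕ → α → ℝ) (hU : ∀ m j, Measurable (U m j))
    (hUindep : iIndepFun
        (fun p : ℕ × ℕ => U p.1 p.2) ℙ)
    (hUunif : ∀ m j, Measure.map (U m j) ℙ = (volume : Measure ℝ).restrict (Set.Icc 0 1))
    (n z : ℕ) : ∫ ω, (pcrD v K U n z ω)^2 ∂ℙ ≤ (z:ℝ) := by
  have hYint : ∀ j j' : ℕ, Integrable (fun ω => pcrY v K U n z j ω * pcrY v K U n z j' ω) ℙ := by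
    intro j j'
    apply pcr_integrable (C := 1)
    · exact (pcrY_meas v K U hU n z j).mul (pcrY_meas v K U hU n z j')
    · intro x
      rw [abs_mul]
      exact mul_le_one₀ (pcrY_abs_le hv0 hv1 hK U n z j x) (abs_nonneg _)
        (pcrY_abs_le hv0 hv1 hK U n z j' x)
  have hexp : (fun ω => (pcrD v K U n z ω)^2) = fun ω => ∑ j ∈ Finset.range z,
      ∑ j' ∈ Finset.range z, pcrY v K U n z j ω * pcrY v K U n z j' ω := by
    funext ω
    rw [pow_two]
    unfold pcrD
    rw [Finset.sum_mul_sum]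
  rw [hexp, integral_finset_sum _ (fun j _ => integrable_finset_sum _ (fun j' _ => hYint j j'))]
  have hterm : ∀ j ∈ Finset.range z,
      (∫ ω, ∑ j' ∈ Finset.range z, pcrY v K U n z j ω * pcrY v K U n z j' ω ∂ℙ) ≤ 1 := by
    intro j hj
    rw [integral_finset_sum _ (fun j' _ => hYint j j')]
    rw [Finset.sum_eq_single_of_mem j hj
      (fun j' _ hne => pcrY_mul_integral hv0 hv1 hK U hU hUindep hUunif n z (Ne.symm hne))]
    calc ∫ ω, pcrY v K U n z j ω * pcrY v K U n z j ω ∂ℙ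
        ≤ ∫ _, (1:ℝ) ∂ℙ := by
          apply integral_mono (hYint j j) (integrable_const 1)
          intro ω
          have h := abs_le.mp (pcrY_abs_le hv0 hv1 hK U n z j ω)
          show pcrY v K U n z j ω * pcrY v K U n z j ω ≤ 1
          nlinarith [h.1, h.2]
      _ = 1 := by simp
  calc (∑ j ∈ Finset.range z, ∫ ω, ∑ j' ∈ Finset.range z,
        pcrY v K U n z j ω * pcrY v K U n z j' ω ∂ℙ)
      ≤ ∑ j ∈ Finset.range z, 1 := Finset.sum_le_sum hterm
    _ = z := by simp

private lemma pcr_step {α : Type*} [MeasureSpace α] [IsProbabilityMeasure (ℙ : Measure α)]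
    {v : ℝ} (hv0 : 0 < v) (hv1 : v ≤ 1) {K : ℕ} (hK : 1 ≤ K)
    (U : ℕ → ℕ → α → ℝ) (hU : ∀ m j, Measurable (U m j))
    (hUindep : iIndepFun
        (fun p : ℕ × ℕ => U p.1 p.2) ℙ)
    (hUunif : ∀ m j, Measure.map (U m j) ℙ = (volume : Measure ℝ).restrict (Set.Icc 0 1))
    (n M : ℕ) (W : α → ℕ) (hWM : ∀ ω, W ω ≤ M)
    (F : ({ x // x ∈ Finset.Icc 1 n ×ˢ Finset.range M } → ℝ) → ℕ)
    (hFmeas : Measurable F)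
    (hFrep : ∀ ω, W ω = F (fun i => U (i : ℕ × ℕ).1 (i : ℕ × ℕ).2 ω)) :
    ∫ ω, (pcrD v K U n (W ω) ω)^2 ∂ℙ ≤ (M:ℝ) := by
  classical
  have hWmeas : Measurable W := by
    have h : W = fun ω => F (fun i => U (i : ℕ × ℕ).1 (i : ℕ × ℕ).2 ω) := funext hFrep
    rw [h]
    exact hFmeas.comp (measurable_pi_lambda _ fun i => hU _ _)
  have hWz : ∀ z : ℕ, MeasurableSet {ω | W ω = z} := by
    intro z
    have : {ω | W ω = z} = W ⁻¹' {z} := by ext ω; simp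
    rw [this]
    exact hWmeas MeasurableSet.of_discrete
  have hIndmeas : ∀ z : ℕ, Measurable (fun ω => if W ω = z then (1:ℝ) else 0) := fun z =>
    Measurable.ite (hWz z) measurable_const measurable_const
  have hDzsq_bd : ∀ (z : ℕ) (ω : α), (pcrD v K U n z ω)^2 ≤ (z:ℝ)^2 := by
    intro z ω
    have h := abs_le.mp (pcrD_abs_le hv0 hv1 hK U n z ω)
    nlinarith [h.1, h.2]
  have hintz : ∀ z : ℕ, Integrable
      (fun ω => (if W ω = z then (1:ℝ) else 0) * (pcrD v K U n z ω)^2) ℙ := by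
    intro z
    refine pcr_integrable ((hIndmeas z).mul ((pcrD_meas v K U hU n z).pow measurable_const))
      (C := (z:ℝ)^2) fun ω => ?_
    rw [abs_mul]
    have h1 : |if W ω = z then (1:ℝ) else 0| ≤ 1 := by split_ifs <;> simp
    have h2 : |(pcrD v K U n z ω)^2| ≤ (z:ℝ)^2 := by
      rw [abs_of_nonneg (sq_nonneg _)]; exact hDzsq_bd z ω
    calc |if W ω = z then (1:ℝ) else 0| * |(pcrD v K U n z ω)^2|
        ≤ 1 * ((z:ℝ)^2) := mul_le_mul h1 h2 (abs_nonneg _) zero_le_one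
      _ = (z:ℝ)^2 := one_mul _
  have hpoint : (fun ω => (pcrD v K U n (W ω) ω)^2) = fun ω => ∑ z ∈ Finset.range (M+1),
      (if W ω = z then (1:ℝ) else 0) * (pcrD v K U n z ω)^2 := by
    funext ω
    rw [Finset.sum_eq_single_of_mem (W ω) (Finset.mem_range.mpr (Nat.lt_succ_of_le (hWM ω)))]
    · simp
    · intro z _ hz
      rw [if_neg (fun h => hz (h.symm)), zero_mul]
  -- independence of the indicator and the squared sum, for each z
  have hindep : ∀ z : ℕ, IndepFun (fun ω => if W ω = z then (1:ℝ) else 0)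
      (fun ω => (pcrD v K U n z ω)^2) ℙ := by
    intro z
    set T : Finset (ℕ × ℕ) := ({n+1} : Finset ℕ) ×ˢ Finset.range z with hT
    have hdisj : Disjoint (Finset.Icc 1 n ×ˢ Finset.range M : Finset (ℕ × ℕ)) T := by
      rw [Finset.disjoint_left]
      rintro ⟨a, b⟩ hSm hTm
      simp only [hT, Finset.mem_product, Finset.mem_Icc, Finset.mem_singleton,
        Finset.mem_range] at hSm hTm
      omega
    have base := hUindep.indepFun_finset _ T hdisj (fun i => hU i.1 i.2)
    have hmemT : ∀ j : {x // x ∈ Finset.range z}, ((n+1 : ℕ), (j : ℕ)) ∈ T := by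
      intro j
      simp only [hT, Finset.mem_product, Finset.mem_singleton, true_and]
      exact j.2
    let φ : ({ x // x ∈ Finset.Icc 1 n ×ˢ Finset.range M } → ℝ) → ℝ := fun g => if F g = z then 1 else 0
    let ψ : ({ x // x ∈ T } → ℝ) → ℝ := fun h => (∑ j ∈ (Finset.range z).attach,
      ((if h ⟨((n+1 : ℕ), (j : ℕ)), hmemT j⟩ ≤ pcrP v K z then (1:ℝ) else 0)
        - pcrP v K z))^2
    have hφm : Measurable φ := by
      have hFz : MeasurableSet {g : { x // x ∈ Finset.Icc 1 n ×ˢ Finset.range M } → ℝ | F g = z} := by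
        have : {g : { x // x ∈ Finset.Icc 1 n ×ˢ Finset.range M } → ℝ | F g = z} = F ⁻¹' {z} := by ext g; simp
        rw [this]
        exact hFmeas MeasurableSet.of_discrete
      exact Measurable.ite hFz measurable_const measurable_const
    have hψm : Measurable ψ := by
      apply Measurable.pow _ measurable_const
      apply Finset.measurable_sum
      intro j _
      exact (Measurable.ite (measurableSet_le (measurable_pi_apply _) measurable_const)
        measurable_const measurable_const).sub measurable_const
    have h1 : (fun ω => if W ω = z then (1:ℝ) else 0)
        = φ ∘ (fun ω (i : { x // x ∈ Finset.Icc 1 n ×ˢ Finset.range M }) => U (i : ℕ × ℕ).1 (i : ℕ × ℕ).2 ω) := by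
      funext ω
      simp only [φ, Function.comp_apply, ← hFrep ω]
    have h2 : (fun ω => (pcrD v K U n z ω)^2)
        = ψ ∘ (fun ω (i : { x // x ∈ T }) => U (i : ℕ × ℕ).1 (i : ℕ × ℕ).2 ω) := by
      funext ω
      simp only [ψ, Function.comp_apply]
      unfold pcrD pcrY
      congr 1
      rw [← Finset.sum_attach (Finset.range z)
        (fun j => (if U (n+1) j ω ≤ pcrP v K z then (1:ℝ) else 0) - pcrP v K z)]
    rw [h1, h2]
    exact base.comp hφm hψm
  have hprod : ∀ z : ℕ, ∫ ω, (if W ω = z then (1:ℝ) else 0) * (pcrD v K U n z ω)^2 ∂ℙ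
      = (ℙ {ω | W ω = z}).toReal * ∫ ω, (pcrD v K U n z ω)^2 ∂ℙ := by
    intro z
    have hmul := (hindep z).integral_mul_eq_mul_integral (hIndmeas z).aestronglyMeasurable
      ((pcrD_meas v K U hU n z).pow measurable_const).aestronglyMeasurable
    have hIa : ∫ ω, (if W ω = z then (1:ℝ) else 0) ∂ℙ = (ℙ {ω | W ω = z}).toReal := by
      have hind : (fun ω => if W ω = z then (1:ℝ) else 0)
          = Set.indicator {ω | W ω = z} (fun _ => (1:ℝ)) := by
        funext ω; simp [Set.indicator_apply]
      rw [hind, integral_indicator_const (1:ℝ) (hWz z)]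
      simp [measureReal_def]
    calc ∫ ω, (if W ω = z then (1:ℝ) else 0) * (pcrD v K U n z ω)^2 ∂ℙ
        = ∫ ω, ((fun ω => if W ω = z then (1:ℝ) else 0) * fun ω => (pcrD v K U n z ω)^2) ω ∂ℙ :=
          rfl
      _ = (∫ ω, (if W ω = z then (1:ℝ) else 0) ∂ℙ) * ∫ ω, (pcrD v K U n z ω)^2 ∂ℙ := hmul
      _ = (ℙ {ω | W ω = z}).toReal * ∫ ω, (pcrD v K U n z ω)^2 ∂ℙ := by rw [hIa]
  have hsum_meas : (∑ z ∈ Finset.range (M+1), ℙ {ω | W ω = z}) ≤ 1 := by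
    have hdisj : (↑(Finset.range (M+1)) : Set ℕ).PairwiseDisjoint
        (fun z => {ω | W ω = z}) := by
      intro a _ b _ hab
      refine Set.disjoint_left.mpr ?_
      intro ω ha hb
      simp only [Set.mem_setOf_eq] at ha hb
      omega
    rw [← measure_biUnion_finset hdisj (fun z _ => hWz z)]
    exact prob_le_one
  calc ∫ ω, (pcrD v K U n (W ω) ω)^2 ∂ℙ
      = ∑ z ∈ Finset.range (M+1),
          ∫ ω, (if W ω = z then (1:ℝ) else 0) * (pcrD v K U n z ω)^2 ∂ℙ := by
        rw [hpoint, integral_finset_sum _ (fun z _ => hintz z)]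
    _ = ∑ z ∈ Finset.range (M+1),
          (ℙ {ω | W ω = z}).toReal * ∫ ω, (pcrD v K U n z ω)^2 ∂ℙ :=
        Finset.sum_congr rfl fun z _ => hprod z
    _ ≤ ∑ z ∈ Finset.range (M+1), (ℙ {ω | W ω = z}).toReal * M := by
        apply Finset.sum_le_sum
        intro z hz
        apply mul_le_mul_of_nonneg_left _ ENNReal.toReal_nonneg
        calc ∫ ω, (pcrD v K U n z ω)^2 ∂ℙ ≤ (z:ℝ) :=
              pcrD_sq_integral hv0 hv1 hK U hU hUindep hUunif n z
          _ ≤ (M:ℝ) := by exact_mod_cast Nat.le_of_lt_succ (Finset.mem_range.mp hz)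
    _ = (∑ z ∈ Finset.range (M+1), (ℙ {ω | W ω = z}).toReal) * M := by
        rw [Finset.sum_mul]
    _ ≤ 1 * M := by
        apply mul_le_mul_of_nonneg_right _ (Nat.cast_nonneg M)
        rw [← ENNReal.toReal_sum (fun z _ => measure_ne_top _ _)]
        calc (∑ z ∈ Finset.range (M+1), ℙ {ω | W ω = z}).toReal
            ≤ (1 : ENNReal).toReal := ENNReal.toReal_mono ENNReal.one_ne_top hsum_meas
          _ = 1 := by simp
    _ = M := one_mul _

private lemma pcr_chebyshev {α : Type*} [MeasureSpace α] [IsProbabilityMeasure (ℙ : Measure α)]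
    {D : α → ℝ} (hm : Measurable D) {B : ℝ} (hb : ∀ ω, |D ω| ≤ B)
    {V : ℝ} (hI : ∫ ω, (D ω)^2 ∂ℙ ≤ V) {c : ℝ} (hc : 0 < c) :
    (ℙ : Measure α) {ω | c ≤ |D ω|} ≤ ENNReal.ofReal (V / c^2) := by
  have hint : Integrable (fun ω => (D ω)^2) ℙ := by
    refine pcr_integrable (hm.pow measurable_const) (C := B^2) fun ω => ?_
    rw [abs_of_nonneg (sq_nonneg _)]
    have h := abs_le.mp (hb ω)
    nlinarith [h.1, h.2]
  have hmk := mul_meas_ge_le_integral_of_nonneg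
    (Filter.Eventually.of_forall fun ω => sq_nonneg (D ω)) hint (c^2)
  have hsub : {ω | c ≤ |D ω|} ⊆ {ω | c^2 ≤ (D ω)^2} := by
    intro ω h
    simp only [Set.mem_setOf_eq] at *
    calc c^2 ≤ |D ω|^2 := pow_le_pow_left₀ hc.le h 2
      _ = (D ω)^2 := sq_abs _
  have h1 : ((ℙ : Measure α) {ω | c ≤ |D ω|}).toReal ≤ V / c^2 := by
    have h2 : ((ℙ : Measure α) {ω | c ≤ |D ω|}).toReal
        ≤ ((ℙ : Measure α) {ω | c^2 ≤ (D ω)^2}).toReal :=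
      ENNReal.toReal_mono (measure_ne_top _ _) (measure_mono hsub)
    have h3 : ((ℙ : Measure α) {ω | c^2 ≤ (D ω)^2}).toReal ≤ (∫ ω, (D ω)^2 ∂ℙ) / c^2 := by
      rw [le_div_iff₀ (by positivity)]
      rw [← measureReal_def]
      linarith [hmk]
    have h4 : (∫ ω, (D ω)^2 ∂ℙ) / c^2 ≤ V / c^2 := (div_le_div_iff_of_pos_right (by positivity)).mpr hI
    linarith
  rw [← ENNReal.ofReal_toReal (measure_ne_top (ℙ : Measure α) _)]
  exact ENNReal.ofReal_le_ofReal h1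

/-- Law of large numbers for the density process of the PCR model: for each `K ≥ 1`,
`Z_n^K` is the Markov chain in which, given `Z_{n−1}^K`, each of the `Z_{n−1}^K`
molecules independently produces one extra copy with probability `vK/(K + Z_{n−1}^K)`
(the conditionally i.i.d. Bernoulli replication variables being realized as indicators
`ξ_{n,j} = 1{U_{n,j} ≤ vK/(K+Z_{n−1}^K)}` of i.i.d. uniform-`[0,1]` variables `U_{n,j}`).
If the initial densities `X_0^K = Z_0^K/K` converge (deterministically) to `x₀ ≥ 0` as
`K → ∞`, then for every fixed `n` the density `X_n^K = Z_n^K/K` converges in probability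
to `f^[n](x₀)` as `K → ∞`. -/
theorem pcr_density_LLN (v : ℝ) (hv : v ∈ Set.Ioc (0:ℝ) 1)
    (f : ℝ → ℝ) (hf : ∀ x, f x = x + v * x / (1 + x))
    (x0 : ℝ) (hx0 : 0 ≤ x0)
    (Ω : ℕ → Type) [mΩ : ∀ K, MeasureSpace (Ω K)]
    [hprob : ∀ K, IsProbabilityMeasure (ℙ : Measure (Ω K))]
    -- i.i.d. uniform-[0,1] random variables driving the replication events
    (U : (K : ℕ) → ℕ → ℕ → Ω K → ℝ)
    (hUmeas : ∀ K n j, Measurable (U K n j))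
    (hUindep : ∀ K, iIndepFun
        (fun p : ℕ × ℕ => U K p.1 p.2) ℙ)
    (hUunif : ∀ K n j,
        Measure.map (U K n j) ℙ = (volume : Measure ℝ).restrict (Set.Icc 0 1))
    -- the PCR Markov chain with carrying parameter K, started from z0 K molecules
    (Z : (K : ℕ) → ℕ → Ω K → ℕ) (z0 : ℕ → ℕ)
    (hZ0 : ∀ K, 1 ≤ K → ∀ ω, Z K 0 ω = z0 K)
    (hZrec : ∀ K, 1 ≤ K → ∀ n, ∀ ω, Z K (n + 1) ω = Z K n ω +
        ∑ j ∈ Finset.range (Z K n ω),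
          if U K (n + 1) j ω ≤ v * (K : ℝ) / ((K : ℝ) + (Z K n ω : ℝ)) then 1 else 0)
    -- deterministic convergence of the initial densities
    (hinit : Tendsto (fun K : ℕ => (z0 K : ℝ) / (K : ℝ)) atTop (𝓝 x0)) :
    ∀ n : ℕ, ∀ ε : ℝ, 0 < ε →
      Tendsto (fun K : ℕ =>
          (ℙ : Measure (Ω K)) {ω | ε ≤ |(Z K n ω : ℝ) / (K : ℝ) - f^[n] x0|})
        atTop (𝓝 (0 : ENNReal)) := by
  classical
  obtain ⟨hv0, hv1⟩ := hv
  -- nonnegativity of the iterates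
  have hiter : ∀ m, 0 ≤ f^[m] x0 := by
    intro m
    induction m with
    | zero => simpa using hx0
    | succ m ihm =>
      rw [Function.iterate_succ_apply', hf]
      have h1 : (0:ℝ) < 1 + f^[m] x0 := by linarith
      have h2 : 0 ≤ v * f^[m] x0 / (1 + f^[m] x0) :=
        div_nonneg (mul_nonneg hv0.le ihm) h1.le
      linarith
  -- deterministic bound on the chain
  have hZb : ∀ K, 1 ≤ K → ∀ m, ∀ ω, Z K m ω ≤ 2^m * z0 K := by
    intro K hK m
    induction m with
    | zero => intro ω; rw [hZ0 K hK ω]; simp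
    | succ m ihm =>
      intro ω
      rw [hZrec K hK m ω]
      have h1 : (∑ j ∈ Finset.range (Z K m ω),
          if U K (m+1) j ω ≤ v * (K:ℝ) / ((K:ℝ) + (Z K m ω : ℝ)) then 1 else 0) ≤ Z K m ω := by
        calc (∑ j ∈ Finset.range (Z K m ω),
            if U K (m+1) j ω ≤ v * (K:ℝ) / ((K:ℝ) + (Z K m ω : ℝ)) then 1 else 0)
            ≤ ∑ _j ∈ Finset.range (Z K m ω), 1 :=
              Finset.sum_le_sum (fun j _ => by split_ifs <;> omega)
          _ = Z K m ω := by simp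
      have h2 := ihm ω
      have h3 : 2^(m+1) * z0 K = 2^m * z0 K + 2^m * z0 K := by ring
      omega
  -- representation of Z K m as a measurable function of finitely many of the U's
  have hrep : ∀ K, 1 ≤ K → ∀ m,
      ∃ F : ({ x // x ∈ Finset.Icc 1 m ×ˢ Finset.range (2^m * z0 K) } → ℝ) → ℕ,
        Measurable F ∧ ∀ ω, Z K m ω = F (fun i => U K (i : ℕ × ℕ).1 (i : ℕ × ℕ).2 ω) := by
    intro K hK m
    induction m with
    | zero => exact ⟨fun _ => z0 K, measurable_const, fun ω => hZ0 K hK ω⟩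
    | succ m ihm =>
      obtain ⟨F, hFm, hFe⟩ := ihm
      have hMM' : 2^m * z0 K ≤ 2^(m+1) * z0 K :=
        Nat.mul_le_mul_right _ (Nat.pow_le_pow_right (by norm_num) (Nat.le_succ m))
      have hsub : (Finset.Icc 1 m ×ˢ Finset.range (2^m * z0 K))
          ⊆ Finset.Icc 1 (m+1) ×ˢ Finset.range (2^(m+1) * z0 K) :=
        Finset.product_subset_product (Finset.Icc_subset_Icc_right (Nat.le_succ m))
          (Finset.range_subset_range.mpr hMM')
      have hmem : ∀ j : { x // x ∈ Finset.range (2^(m+1) * z0 K) },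
          ((m+1 : ℕ), (j : ℕ)) ∈ Finset.Icc 1 (m+1) ×ˢ Finset.range (2^(m+1) * z0 K) := by
        intro j
        simp only [Finset.mem_product, Finset.mem_Icc, Finset.mem_range]
        exact ⟨⟨Nat.one_le_iff_ne_zero.mpr (Nat.succ_ne_zero m), le_refl _⟩,
          Finset.mem_range.mp j.2⟩
      set G : ({ x // x ∈ Finset.Icc 1 (m+1) ×ˢ Finset.range (2^(m+1) * z0 K) } → ℝ) → ℕ :=
        fun g => F (fun i => g ⟨(i : ℕ × ℕ), hsub i.2⟩) with hG
      have hGm : Measurable G :=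
        hFm.comp (measurable_pi_lambda _ fun i => measurable_pi_apply _)
      refine ⟨fun g => G g + ∑ j ∈ (Finset.range (2^(m+1) * z0 K)).attach,
        (if ((j:ℕ) < G g ∧ g ⟨((m+1 : ℕ), (j:ℕ)), hmem j⟩ ≤ v * (K:ℝ) / ((K:ℝ) + (G g : ℝ)))
          then 1 else 0), ?_, ?_⟩
      · apply Measurable.add hGm
        apply Finset.measurable_sum
        intro j _
        have hset : MeasurableSet {g : ({ x // x ∈ Finset.Icc 1 (m+1) ×ˢ
            Finset.range (2^(m+1) * z0 K) } → ℝ) |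
            (j:ℕ) < G g ∧ g ⟨((m+1:ℕ), (j:ℕ)), hmem j⟩ ≤ v * (K:ℝ) / ((K:ℝ) + (G g : ℝ))} := by
          have heq : {g : ({ x // x ∈ Finset.Icc 1 (m+1) ×ˢ
              Finset.range (2^(m+1) * z0 K) } → ℝ) |
              (j:ℕ) < G g ∧ g ⟨((m+1:ℕ), (j:ℕ)), hmem j⟩ ≤ v * (K:ℝ) / ((K:ℝ) + (G g : ℝ))}
              = (G ⁻¹' {k | (j:ℕ) < k}) ∩
                {g | g ⟨((m+1:ℕ), (j:ℕ)), hmem j⟩ ≤ v * (K:ℝ) / ((K:ℝ) + (G g : ℝ))} := rfl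
          rw [heq]
          refine (hGm MeasurableSet.of_discrete).inter ?_
          exact measurableSet_le (measurable_pi_apply _)
            ((Measurable.of_discrete (f := fun z : ℕ => v * (K:ℝ) / ((K:ℝ) + (z:ℝ)))).comp hGm)
        exact Measurable.ite hset measurable_const measurable_const
      · intro ω
        have hGe : G (fun i => U K (i : ℕ × ℕ).1 (i : ℕ × ℕ).2 ω) = Z K m ω := (hFe ω).symm
        rw [hZrec K hK m ω]
        simp only [hGe]
        congr 1
        rw [Finset.sum_attach (Finset.range (2^(m+1) * z0 K))
          (fun j => if (j < Z K m ω ∧ U K (m+1) j ω ≤ v * (K:ℝ) / ((K:ℝ) + (Z K m ω : ℝ)))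
            then 1 else 0)]
        exact (pcr_sum_ite ((hZb K hK m ω).trans hMM')
          (fun j => U K (m+1) j ω ≤ v * (K:ℝ) / ((K:ℝ) + (Z K m ω : ℝ)))).symm
  -- the martingale-difference identity
  have hDeq : ∀ K, 1 ≤ K → ∀ n ω, pcrD v K (U K) n (Z K n ω) ω
      = (Z K (n+1) ω : ℝ) - ((Z K n ω : ℝ) + (Z K n ω : ℝ) * pcrP v K (Z K n ω)) := by
    intro K hK n ω
    unfold pcrD pcrY pcrP
    rw [hZrec K hK n ω, Finset.sum_sub_distrib, Finset.sum_const, Finset.card_range,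
      nsmul_eq_mul]
    push_cast [apply_ite (Nat.cast : ℕ → ℝ)]
    ring
  intro n
  induction n with
  | zero =>
    intro ε hε
    have hev : ∀ᶠ K in atTop,
        (ℙ : Measure (Ω K)) {ω | ε ≤ |(Z K 0 ω : ℝ) / (K:ℝ) - f^[0] x0|} = 0 := by
      have h1 : ∀ᶠ K : ℕ in atTop, |(z0 K : ℝ)/(K:ℝ) - x0| < ε := by
        have h2 := Metric.tendsto_nhds.mp hinit ε hε
        filter_upwards [h2] with K hK
        rwa [Real.dist_eq] at hK
      filter_upwards [h1, eventually_ge_atTop 1] with K hK hK1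
      have hempty : {ω : Ω K | ε ≤ |(Z K 0 ω : ℝ) / (K:ℝ) - f^[0] x0|} = ∅ := by
        ext ω
        simp only [Set.mem_setOf_eq, Set.mem_empty_iff_false, iff_false, not_le,
          Function.iterate_zero_apply]
        rw [hZ0 K hK1 ω]
        exact hK
      rw [hempty]
      exact measure_empty
    exact (tendsto_const_nhds : Tendsto (fun _ : ℕ => (0:ENNReal)) atTop
      (𝓝 0)).congr' (hev.mono fun K h => h.symm)
  | succ n ih =>
    intro ε hε
    -- the quantitative Chebyshev bound for the deviation from the conditional mean
    have key : ∀ K, 1 ≤ K →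
        (ℙ : Measure (Ω K)) {ω | ε*K/2 ≤ |pcrD v K (U K) n (Z K n ω) ω|}
          ≤ ENNReal.ofReal (((2^n * z0 K : ℕ) : ℝ) / (ε*K/2)^2) := by
      intro K hK
      have hKpos : (0:ℝ) < K := by exact_mod_cast hK
      obtain ⟨F, hFm, hFe⟩ := hrep K hK n
      have hstep := pcr_step hv0 hv1 hK (U K) (hUmeas K) (hUindep K) (hUunif K)
        n (2^n * z0 K) (Z K n) (hZb K hK n) F hFm hFe
      obtain ⟨F', hFm', hFe'⟩ := hrep K hK (n+1)
      have hZm : Measurable (Z K n) := by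
        have h : Z K n = fun ω => F (fun i => U K (i : ℕ × ℕ).1 (i : ℕ × ℕ).2 ω) := funext hFe
        rw [h]
        exact hFm.comp (measurable_pi_lambda _ fun i => hUmeas K _ _)
      have hZm1 : Measurable (Z K (n+1)) := by
        have h : Z K (n+1) = fun ω => F' (fun i => U K (i : ℕ × ℕ).1 (i : ℕ × ℕ).2 ω) :=
          funext hFe'
        rw [h]
        exact hFm'.comp (measurable_pi_lambda _ fun i => hUmeas K _ _)
      have hDm : Measurable (fun ω => pcrD v K (U K) n (Z K n ω) ω) := by
        have h : (fun ω => pcrD v K (U K) n (Z K n ω) ω)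
            = fun ω => ((Z K (n+1) ω : ℝ))
              - ((fun z : ℕ => (z:ℝ) + (z:ℝ) * pcrP v K z) (Z K n ω)) :=
          funext fun ω => hDeq K hK n ω
        rw [h]
        exact ((Measurable.of_discrete (f := fun z : ℕ => (z:ℝ))).comp hZm1).sub
          ((Measurable.of_discrete (f := fun z : ℕ => (z:ℝ) + (z:ℝ) * pcrP v K z)).comp hZm)
      have hDb : ∀ ω, |pcrD v K (U K) n (Z K n ω) ω| ≤ ((2^n * z0 K : ℕ) : ℝ) := by
        intro ω
        calc |pcrD v K (U K) n (Z K n ω) ω| ≤ (Z K n ω : ℝ) :=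
              pcrD_abs_le hv0 hv1 hK (U K) n (Z K n ω) ω
          _ ≤ ((2^n * z0 K : ℕ) : ℝ) := by exact_mod_cast hZb K hK n ω
      exact pcr_chebyshev hDm hDb hstep (by positivity)
    -- the inclusion of events
    have hsub : ∀ K : ℕ, 1 ≤ K →
        {ω | ε ≤ |(Z K (n+1) ω : ℝ) / (K:ℝ) - f^[n+1] x0|} ⊆
          {ω | ε*K/2 ≤ |pcrD v K (U K) n (Z K n ω) ω|}
            ∪ {ω | ε/4 ≤ |(Z K n ω : ℝ) / (K:ℝ) - f^[n] x0|} := by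
      intro K hK ω hω
      have hKpos : (0:ℝ) < K := by exact_mod_cast hK
      simp only [Set.mem_setOf_eq, Set.mem_union]
      by_contra hcon
      push_neg at hcon
      obtain ⟨h1, h2⟩ := hcon
      simp only [Set.mem_setOf_eq] at hω
      set x : ℝ := (Z K n ω : ℝ) / (K:ℝ) with hx
      have hxnn : 0 ≤ x := by positivity
      have hfx : f x = ((Z K n ω : ℝ) + (Z K n ω : ℝ) * pcrP v K (Z K n ω)) / K := by
        rw [hf]
        unfold pcrP
        rw [hx]
        have hzden : (0:ℝ) < (K:ℝ) + (Z K n ω : ℝ) := by positivity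
        field_simp
      have hXd : (Z K (n+1) ω : ℝ) / (K:ℝ) - f x = (pcrD v K (U K) n (Z K n ω) ω) / K := by
        rw [hfx, hDeq K hK n ω, sub_div]
      have hlip : |f x - f (f^[n] x0)| ≤ 2 * |x - f^[n] x0| := by
        rw [hf x, hf (f^[n] x0)]
        exact pcr_lip hv0 hv1 hxnn (hiter n)
      have habs : |(Z K (n+1) ω : ℝ) / (K:ℝ) - f^[n+1] x0|
          ≤ |(Z K (n+1) ω : ℝ) / (K:ℝ) - f x| + |f x - f (f^[n] x0)| := by
        rw [Function.iterate_succ_apply']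
        exact abs_sub_le _ _ _
      have hd1 : |(Z K (n+1) ω : ℝ) / (K:ℝ) - f x| < ε/2 := by
        rw [hXd, abs_div, abs_of_pos hKpos, div_lt_iff₀ hKpos]
        calc |pcrD v K (U K) n (Z K n ω) ω| < ε*K/2 := h1
          _ = ε/2*K := by ring
      have hd2 : |f x - f (f^[n] x0)| < ε/2 := by
        calc |f x - f (f^[n] x0)| ≤ 2 * |x - f^[n] x0| := hlip
          _ < 2 * (ε/4) := by
            apply mul_lt_mul_of_pos_left _ two_pos
            exact h2
          _ = ε/2 := by ring
      linarith
    -- eventual control of z0 K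
    have hC : ∀ᶠ K : ℕ in atTop, (z0 K : ℝ) ≤ (x0+1) * K := by
      have h1 := hinit.eventually_lt_const (show x0 < x0 + 1 by linarith)
      filter_upwards [h1, eventually_ge_atTop 1] with K hK hK1
      have hKpos : (0:ℝ) < K := by exact_mod_cast hK1
      rw [div_lt_iff₀ hKpos] at hK
      linarith
    -- the eventual bound on the bad probability
    have hbnd : ∀ᶠ K : ℕ in atTop,
        (ℙ : Measure (Ω K)) {ω | ε ≤ |(Z K (n+1) ω : ℝ) / (K:ℝ) - f^[n+1] x0|}
          ≤ ENNReal.ofReal ((2^n * (x0+1) * 4 / ε^2) / K)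
            + (ℙ : Measure (Ω K)) {ω | ε/4 ≤ |(Z K n ω : ℝ) / (K:ℝ) - f^[n] x0|} := by
      filter_upwards [eventually_ge_atTop 1, hC] with K hK hzK
      have hKpos : (0:ℝ) < K := by exact_mod_cast hK
      have hq : ((2^n * z0 K : ℕ) : ℝ) / (ε*K/2)^2 ≤ (2^n * (x0+1) * 4 / ε^2) / K := by
        push_cast
        rw [div_le_div_iff₀ (by positivity) hKpos]
        calc (2:ℝ)^n * z0 K * K ≤ 2^n * ((x0+1)*K) * K := by
              have := mul_le_mul_of_nonneg_left hzK (by positivity : (0:ℝ) ≤ 2^n)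
              nlinarith
          _ = 2^n * (x0+1) * 4 / ε^2 * (ε*K/2)^2 := by
              field_simp
              ring
      calc (ℙ : Measure (Ω K)) {ω | ε ≤ |(Z K (n+1) ω : ℝ) / (K:ℝ) - f^[n+1] x0|}
          ≤ (ℙ : Measure (Ω K)) ({ω | ε*K/2 ≤ |pcrD v K (U K) n (Z K n ω) ω|}
              ∪ {ω | ε/4 ≤ |(Z K n ω : ℝ) / (K:ℝ) - f^[n] x0|}) :=
            measure_mono (hsub K hK)
        _ ≤ (ℙ : Measure (Ω K)) {ω | ε*K/2 ≤ |pcrD v K (U K) n (Z K n ω) ω|}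
              + (ℙ : Measure (Ω K)) {ω | ε/4 ≤ |(Z K n ω : ℝ) / (K:ℝ) - f^[n] x0|} :=
            measure_union_le _ _
        _ ≤ ENNReal.ofReal ((2^n * (x0+1) * 4 / ε^2) / K)
              + (ℙ : Measure (Ω K)) {ω | ε/4 ≤ |(Z K n ω : ℝ) / (K:ℝ) - f^[n] x0|} := by
            apply add_le_add_left
            exact (key K hK).trans (ENNReal.ofReal_le_ofReal hq)
    -- conclude by squeezing
    have hlim : Tendsto (fun K : ℕ => ENNReal.ofReal ((2^n * (x0+1) * 4 / ε^2) / K)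
        + (ℙ : Measure (Ω K)) {ω | ε/4 ≤ |(Z K n ω : ℝ) / (K:ℝ) - f^[n] x0|})
        atTop (𝓝 (0 : ENNReal)) := by
      have h1 : Tendsto (fun K : ℕ => ENNReal.ofReal ((2^n * (x0+1) * 4 / ε^2) / K))
          atTop (𝓝 (0 : ENNReal)) := by
        have h2 := tendsto_const_div_atTop_nhds_zero_nat (2^n * (x0+1) * 4 / ε^2)
        have h3 := ENNReal.tendsto_ofReal h2
        simpa using h3
      have h4 := ih (ε/4) (by positivity)
      have h5 := h1.add h4
      simpa using h5
    exact tendsto_of_tendsto_of_tendsto_of_le_of_le' tendsto_const_nhds hlim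
      (Filter.Eventually.of_forall fun K => zero_le) hbnd

end
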